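/- In the special case of the previous setup, for all n \ge 2: \sum_{k=1}^n \lambda_k(n-1) B_{n,k}(x_1, x_2, ..., x_{n-k+1}) = 0. -/

import Mathlib

open PowerSeries Finset
noncomputable section

/-- Coefficient-wise composition `f ∘ g` of formal power series; this agrees with the
usual composition when `g` has zero constant term. -/
def scomp (f g : PowerSeries ℂ) : PowerSeries ℂ :=
  PowerSeries.mk fun N => ∑ n ∈ Finset.range (N + 1),
    (PowerSeries.coeff (R := ℂ) n f) * (PowerSeries.coeff (R := ℂ) N (g ^ n))

/-- The exponential series `∑ t^n/n!`. -/
def expS : PowerSeries ℂ := PowerSeries.mk fun n => 1 / (n.factorial : ℂ)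

/-- The series `log(1+t) = ∑_{n≥1} (-1)^{n+1} t^n / n`. -/
def logS : PowerSeries ℂ := PowerSeries.mk fun n => if n = 0 then 0 else (-1) ^ (n + 1) / (n : ℂ)

/-- Complex power `φ^q := exp (q · log φ)`, well defined when `φ` has constant term 1. -/
def cpow (φ : PowerSeries ℂ) (q : ℂ) : PowerSeries ℂ :=
  scomp expS (q • scomp logS (φ - 1))

/-- Formal derivative. -/
def D (f : PowerSeries ℂ) : PowerSeries ℂ :=
  PowerSeries.mk fun n => ((n + 1 : ℕ) : ℂ) * PowerSeries.coeff (R := ℂ) (n + 1) f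

/-- Generalized binomial coefficient `binom(t, k) = t(t-1)⋯(t-k+1)/k!`. -/
def gbinom (t : ℂ) (k : ℕ) : ℂ := (∏ j ∈ Finset.range k, (t - j)) / (k.factorial : ℂ)

/-- The ordinary Bell polynomial `B_{n,k}(x_1, …, x_{n-k+1})`. -/
def ordBell (n k : ℕ) (x : ℕ → ℂ) : ℂ :=
  ∑ i : Fin (n - k + 1) → Fin (n + 1),
    if (∑ j, (i j : ℕ)) = k ∧ (∑ j, (j.1 + 1) * (i j : ℕ)) = n then
      ((k.factorial : ℂ) / ∏ j, ((i j : ℕ).factorial : ℂ)) * ∏ j, x (j.1 + 1) ^ (i j : ℕ)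
    else 0

-- coefficients of powers of a series with zero constant term vanish below the order
lemma coeff_pow_zero_of_lt {f : PowerSeries ℂ} (hf : constantCoeff (R := ℂ) f = 0)
    {j k : ℕ} (h : j < k) : PowerSeries.coeff (R := ℂ) j (f ^ k) = 0 := by
  obtain ⟨g, hg⟩ : (X : PowerSeries ℂ) ∣ f := PowerSeries.X_dvd_iff.2 hf
  have : f ^ k = X ^ k * g ^ k := by rw [hg, mul_pow]
  rw [this, PowerSeries.coeff_mul]
  refine Finset.sum_eq_zero fun p hp => ?_
  rw [Finset.HasAntidiagonal.mem_antidiagonal] at hp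
  rw [PowerSeries.coeff_X_pow, if_neg (by omega), zero_mul]

lemma coeff_scomp (f g : PowerSeries ℂ) (N : ℕ) :
    PowerSeries.coeff (R := ℂ) N (scomp f g) =
      ∑ n ∈ Finset.range (N + 1), (PowerSeries.coeff (R := ℂ) n f) * (PowerSeries.coeff (R := ℂ) N (g ^ n)) := by
  simp [scomp]

lemma coeff_expS (n : ℕ) : PowerSeries.coeff (R := ℂ) n expS = 1 / (n.factorial : ℂ) := by
  simp [expS]

/-- Chain rule for `scomp expS`. -/
lemma deriv_scomp_expS (f : PowerSeries ℂ) (hf : constantCoeff (R := ℂ) f = 0) :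
    d⁄dX ℂ (scomp expS f) = (d⁄dX ℂ f) * scomp expS f := by
  ext N
  rw [PowerSeries.coeff_derivative, coeff_scomp]
  have step1 : ∀ n : ℕ, PowerSeries.coeff (R := ℂ) (N + 1) (f ^ n) * (N + 1 : ℂ)
      = (n : ℂ) * PowerSeries.coeff (R := ℂ) N (f ^ (n - 1) * d⁄dX ℂ f) := by
    intro n
    calc PowerSeries.coeff (R := ℂ) (N + 1) (f ^ n) * (N + 1 : ℂ)
        = PowerSeries.coeff (R := ℂ) N (d⁄dX ℂ (f ^ n)) := (PowerSeries.coeff_derivative _ _).symm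
      _ = PowerSeries.coeff (R := ℂ) N ((n : ℕ) • (f ^ (n - 1) • d⁄dX ℂ f)) := by
          rw [Derivation.leibniz_pow]
      _ = (n : ℂ) * PowerSeries.coeff (R := ℂ) N (f ^ (n - 1) * d⁄dX ℂ f) := by
          rw [smul_eq_mul, map_nsmul, nsmul_eq_mul]
  have lhs_eq : (∑ n ∈ Finset.range (N + 2),
        PowerSeries.coeff (R := ℂ) n expS * PowerSeries.coeff (R := ℂ) (N + 1) (f ^ n)) * (N + 1 : ℂ)
      = ∑ k ∈ Finset.range (N + 1),
        PowerSeries.coeff (R := ℂ) k expS * PowerSeries.coeff (R := ℂ) N (f ^ k * d⁄dX ℂ f) := by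
    rw [Finset.sum_mul]
    rw [Finset.sum_range_succ']
    have h0 : PowerSeries.coeff (R := ℂ) 0 expS * PowerSeries.coeff (R := ℂ) (N + 1) ((f : PowerSeries ℂ) ^ 0) * (N+1:ℂ) = 0 := by
      simp [PowerSeries.coeff_one]
    rw [h0, add_zero]
    refine Finset.sum_congr rfl fun k hk => ?_
    rw [mul_assoc, step1 (k+1)]
    simp only [Nat.add_sub_cancel, coeff_expS]
    have h2 : (Nat.factorial k : ℂ) ≠ 0 := Nat.cast_ne_zero.2 (Nat.factorial_ne_zero _)
    have hk1 : ((k:ℂ)+1) ≠ 0 := Nat.cast_add_one_ne_zero k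
    have h3 : ((k+1).factorial : ℂ) = ((k:ℂ)+1) * k.factorial := by
      rw [Nat.factorial_succ]; push_cast; ring
    rw [h3]
    push_cast
    field_simp
  rw [lhs_eq]
  rw [mul_comm (d⁄dX ℂ f) (scomp expS f), PowerSeries.coeff_mul]
  have rhs_eq : ∀ p ∈ Finset.HasAntidiagonal.antidiagonal N,
      PowerSeries.coeff (R := ℂ) p.1 (scomp expS f) * PowerSeries.coeff (R := ℂ) p.2 (d⁄dX ℂ f)
      = ∑ k ∈ Finset.range (N + 1),
          PowerSeries.coeff (R := ℂ) k expS * (PowerSeries.coeff (R := ℂ) p.1 (f ^ k) * PowerSeries.coeff (R := ℂ) p.2 (d⁄dX ℂ f)) := by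
    intro p hp
    rw [Finset.HasAntidiagonal.mem_antidiagonal] at hp
    have hsub : Finset.range (p.1 + 1) ⊆ Finset.range (N + 1) := Finset.range_subset_range.2 (by omega)
    have hext : (∑ n ∈ Finset.range (p.1 + 1),
          PowerSeries.coeff (R := ℂ) n expS * PowerSeries.coeff (R := ℂ) p.1 (f ^ n))
        = ∑ n ∈ Finset.range (N + 1),
          PowerSeries.coeff (R := ℂ) n expS * PowerSeries.coeff (R := ℂ) p.1 (f ^ n) := by
      apply Finset.sum_subset hsub
      intro k hk hk'
      rw [Finset.mem_range] at hk hk'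
      rw [coeff_pow_zero_of_lt hf (by omega), mul_zero]
    rw [coeff_scomp, hext, Finset.sum_mul]
    exact Finset.sum_congr rfl fun k _ => by ring
  rw [Finset.sum_congr rfl rhs_eq, Finset.sum_comm]
  refine Finset.sum_congr rfl fun k _ => ?_
  rw [← Finset.mul_sum, PowerSeries.coeff_mul]

lemma coeff_logS (n : ℕ) :
    PowerSeries.coeff (R := ℂ) n logS = if n = 0 then 0 else (-1) ^ (n + 1) / (n : ℂ) := by
  simp [logS]

lemma constantCoeff_logS : constantCoeff (R := ℂ) logS = 0 := by
  rw [← PowerSeries.coeff_zero_eq_constantCoeff, coeff_logS]; simp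

lemma scomp_logS_X : scomp logS ((1 + X : PowerSeries ℂ) - 1) = logS := by
  have h : (1 + X : PowerSeries ℂ) - 1 = X := by ring
  rw [h]
  ext N
  rw [coeff_scomp]
  rw [Finset.sum_eq_single N]
  · rw [PowerSeries.coeff_X_pow, if_pos rfl, mul_one]
  · intro b hb hbN
    rw [PowerSeries.coeff_X_pow, if_neg (fun h => hbN h.symm), mul_zero]
  · intro h
    exact absurd (Finset.self_mem_range_succ N) h

lemma deriv_logS_eq : ((1 : PowerSeries ℂ) + X) * d⁄dX ℂ logS = 1 := by
  have hco : ∀ N : ℕ, PowerSeries.coeff (R := ℂ) N (d⁄dX ℂ logS) = (-1) ^ N := by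
    intro N
    rw [PowerSeries.coeff_derivative, coeff_logS, if_neg (Nat.succ_ne_zero N)]
    have : ((N:ℂ) + 1) ≠ 0 := Nat.cast_add_one_ne_zero N
    push_cast
    field_simp
    ring
  ext N
  rw [add_mul, one_mul, map_add, PowerSeries.coeff_one]
  cases N with
  | zero => rw [hco 0]; simp [PowerSeries.coeff_zero_X_mul]
  | succ n =>
    rw [PowerSeries.coeff_succ_X_mul, hco, hco, if_neg (Nat.succ_ne_zero n)]
    rw [pow_succ]
    ring

lemma gbinom_zero (s : ℂ) : gbinom s 0 = 1 := by simp [gbinom]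

lemma gbinom_succ (s : ℂ) (N : ℕ) :
    gbinom s (N + 1) * ((N : ℂ) + 1) = (s - N) * gbinom s N := by
  rw [gbinom, gbinom, Finset.prod_range_succ, Nat.factorial_succ]
  have h2 : (Nat.factorial N : ℂ) ≠ 0 := Nat.cast_ne_zero.2 (Nat.factorial_ne_zero _)
  have hk1 : ((N:ℂ)+1) ≠ 0 := Nat.cast_add_one_ne_zero N
  push_cast
  field_simp

lemma coeff_cpow (s : ℂ) (N : ℕ) :
    PowerSeries.coeff (R := ℂ) N (cpow (1 + X) s) = gbinom s N := by
  have hL : constantCoeff (R := ℂ) (s • logS) = 0 := by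
    rw [← PowerSeries.coeff_zero_eq_constantCoeff_apply, map_smul, smul_eq_mul,
      coeff_logS]
    simp
  have hE : cpow (1 + X) s = scomp expS (s • logS) := by
    rw [cpow, scomp_logS_X]
  set E := scomp expS (s • logS) with hEdef
  have key : ((1 : PowerSeries ℂ) + X) * d⁄dX ℂ E = s • E := by
    rw [hEdef, deriv_scomp_expS _ hL, Derivation.map_smul]
    rw [← mul_assoc, mul_smul_comm, deriv_logS_eq, smul_mul_assoc, one_mul]
  have recur : ∀ n : ℕ, PowerSeries.coeff (R := ℂ) (n + 1) E * ((n : ℂ) + 1) + (n : ℂ) * PowerSeries.coeff (R := ℂ) n E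
      = s * PowerSeries.coeff (R := ℂ) n E := by
    intro n
    have h := congrArg (PowerSeries.coeff (R := ℂ) n) key
    rw [add_mul, one_mul, map_add, map_smul, smul_eq_mul] at h
    rw [← h, PowerSeries.coeff_derivative]
    cases n with
    | zero => simp [PowerSeries.coeff_zero_X_mul]
    | succ m =>
      rw [PowerSeries.coeff_succ_X_mul, PowerSeries.coeff_derivative]
      push_cast
      ring
  have e0 : PowerSeries.coeff (R := ℂ) 0 E = 1 := by
    rw [hEdef, coeff_scomp]
    simp [coeff_expS, PowerSeries.coeff_zero_eq_constantCoeff]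
  rw [hE]
  induction N with
  | zero => rw [e0, gbinom_zero]
  | succ n ih =>
    have hrec := recur n
    rw [ih] at hrec
    have hg := gbinom_succ s n
    have hk1 : ((n:ℂ)+1) ≠ 0 := Nat.cast_add_one_ne_zero n
    have h2 : PowerSeries.coeff (R := ℂ) (n+1) E * ((n:ℂ)+1) = (s - n) * gbinom s n := by
      linear_combination hrec
    rw [← hg] at h2
    exact mul_right_cancel₀ hk1 h2

lemma gbinom_nat_sub_one (n : ℕ) (hn : 1 ≤ n) : gbinom ((n : ℂ) - 1) n = 0 := by
  rw [gbinom]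
  rw [Finset.prod_eq_zero (Finset.mem_range.2 (show n - 1 < n by omega))]
  · exact zero_div _
  · have : ((n - 1 : ℕ) : ℂ) = (n : ℂ) - 1 := by
      push_cast [Nat.cast_sub hn]; ring
    rw [this]; ring

/-- reindexing: a product over `Icc 1 n` of a function that is `1` above `m ≤ n`
equals the product over `Fin m` shifted by one. -/
lemma prod_Icc_eq_fin {M : Type*} [CommMonoid M] (n m : ℕ) (hm : 1 ≤ m) (hmn : m ≤ n)
    (f : ℕ → M) (hf : ∀ v, m < v → f v = 1) :
    ∏ v ∈ Icc 1 n, f v = ∏ j : Fin m, f (j.1 + 1) := by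
  have h1 : ∏ v ∈ Icc 1 n, f v = ∏ v ∈ Icc 1 m, f v := by
    refine (Finset.prod_subset (Finset.Icc_subset_Icc_right hmn) ?_).symm
    intro v hv hv'
    rw [Finset.mem_Icc] at hv hv'
    exact hf v (by omega)
  rw [h1, Fin.prod_univ_eq_prod_range (fun j => f (j + 1)) m]
  apply Finset.prod_nbij' (fun v => v - 1) (fun j => j + 1)
  · intro v hv; rw [Finset.mem_Icc] at hv; rw [Finset.mem_range]; omega
  · intro j hj; rw [Finset.mem_range] at hj; rw [Finset.mem_Icc]; omega
  · intro v hv; rw [Finset.mem_Icc] at hv; omega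
  · intro j hj; omega
  · intro v hv; rw [Finset.mem_Icc] at hv; congr 1; omega

lemma sum_Icc_eq_fin (n m : ℕ) (hm : 1 ≤ m) (hmn : m ≤ n)
    (f : ℕ → ℕ) (hf : ∀ v, m < v → f v = 0) :
    ∑ v ∈ Icc 1 n, f v = ∑ j : Fin m, f (j.1 + 1) :=
  prod_Icc_eq_fin (M := Multiplicative ℕ) n m hm hmn f hf

/-- If `g` is supported in `Icc 1 n`, sums to `k ≥ 1` and `∑ v * g v = n`, then
`g` vanishes above `n - k + 1`. -/
lemma support_bound {n k : ℕ} (hk : 1 ≤ k) (g : ℕ → ℕ)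
    (hsupp : ∀ v, g v ≠ 0 → v ∈ Icc 1 n)
    (hsum : ∑ v ∈ Icc 1 n, g v = k)
    (hwt : ∑ v ∈ Icc 1 n, v * g v = n) :
    ∀ v, n - k + 1 < v → g v = 0 := by
  intro v hv
  by_contra hgv
  have hvmem : v ∈ Icc 1 n := hsupp v hgv
  rw [Finset.mem_Icc] at hvmem
  have h1 : v * g v + ∑ w ∈ (Icc 1 n).erase v, w * g w = n := by
    have h := Finset.add_sum_erase (Icc 1 n) (fun w => w * g w) (Finset.mem_Icc.2 hvmem)
    rw [hwt] at h
    exact h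
  have h2 : g v + ∑ w ∈ (Icc 1 n).erase v, g w = k := by
    have h := Finset.add_sum_erase (Icc 1 n) (fun w => g w) (Finset.mem_Icc.2 hvmem)
    rw [hsum] at h
    exact h
  have h3 : ∑ w ∈ (Icc 1 n).erase v, g w ≤ ∑ w ∈ (Icc 1 n).erase v, w * g w := by
    refine Finset.sum_le_sum fun w hw => ?_
    have hw1 : 1 ≤ w := (Finset.mem_Icc.1 (Finset.mem_of_mem_erase hw)).1
    calc g w = 1 * g w := (one_mul _).symm
    _ ≤ w * g w := Nat.mul_le_mul_right _ hw1
  have hgv1 : 1 ≤ g v := Nat.one_le_iff_ne_zero.2 hgv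
  have h4 : v + (g v - 1) ≤ v * g v := by
    obtain ⟨w, hgw⟩ : ∃ w, g v = w + 1 := ⟨g v - 1, by omega⟩
    rw [hgw]
    have hle : w ≤ v * w := Nat.le_mul_of_pos_left w (by omega)
    have hvw : v * (w + 1) = v * w + v := by ring
    omega
  omega

lemma coeff_pow_congr {f g : PowerSeries ℂ} {n : ℕ}
    (h : ∀ j ≤ n, PowerSeries.coeff (R := ℂ) j f = PowerSeries.coeff (R := ℂ) j g) (k : ℕ) :
    ∀ j ≤ n, PowerSeries.coeff (R := ℂ) j (f ^ k) = PowerSeries.coeff (R := ℂ) j (g ^ k) := by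
  induction k with
  | zero => intro j hj; rfl
  | succ k ih =>
    intro j hj
    rw [pow_succ, pow_succ, PowerSeries.coeff_mul, PowerSeries.coeff_mul]
    refine Finset.sum_congr rfl fun p hp => ?_
    rw [Finset.HasAntidiagonal.mem_antidiagonal] at hp
    rw [ih p.1 (by omega), h p.2 (by omega)]

lemma coeff_F_pow (n k : ℕ) (hk : 1 ≤ k) (hkn : k ≤ n) (x : ℕ → ℂ)
    (F : PowerSeries ℂ) (hF : F = PowerSeries.mk fun n => if n = 0 then 0 else x n) :
    PowerSeries.coeff (R := ℂ) n (F ^ k) = ordBell n k x := by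
  classical
  set P : PowerSeries ℂ := ∑ v ∈ Icc 1 n, PowerSeries.C (R := ℂ) (x v) * X ^ v with hP
  have hcP : ∀ j : ℕ, PowerSeries.coeff (R := ℂ) j P = if j ∈ Icc 1 n then x j else 0 := by
    intro j
    rw [hP, map_sum]
    rw [Finset.sum_congr rfl (fun v _ => by
      rw [PowerSeries.coeff_C_mul, PowerSeries.coeff_X_pow, mul_ite, mul_one, mul_zero])]
    rw [Finset.sum_ite_eq _ j x]
  have hcong : ∀ j ≤ n, PowerSeries.coeff (R := ℂ) j F = PowerSeries.coeff (R := ℂ) j P := by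
    intro j hj
    rw [hF, PowerSeries.coeff_mk, hcP]
    rcases Nat.eq_zero_or_pos j with h0 | h1
    · subst h0; simp
    · rw [if_neg (by omega), if_pos (Finset.mem_Icc.2 ⟨h1, hj⟩)]
  rw [coeff_pow_congr hcong k n le_rfl]
  -- multinomial expansion
  have hPk : P ^ k = ∑ g ∈ Finset.piAntidiag (Icc 1 n) k,
      (Nat.multinomial (Icc 1 n) g : PowerSeries ℂ) *
        ∏ v ∈ Icc 1 n, (PowerSeries.C (R := ℂ) (x v) * X ^ v) ^ g v := by
    rw [hP, Finset.sum_pow_eq_sum_piAntidiag]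
  rw [hPk, map_sum]
  have hterm : ∀ g ∈ Finset.piAntidiag (Icc 1 n) k,
      PowerSeries.coeff (R := ℂ) n ((Nat.multinomial (Icc 1 n) g : PowerSeries ℂ) *
        ∏ v ∈ Icc 1 n, (PowerSeries.C (R := ℂ) (x v) * X ^ v) ^ g v)
      = if ∑ v ∈ Icc 1 n, v * g v = n then
          (Nat.multinomial (Icc 1 n) g : ℂ) * ∏ v ∈ Icc 1 n, x v ^ g v
        else 0 := by
    intro g _
    have hprod : ∏ v ∈ Icc 1 n, (PowerSeries.C (R := ℂ) (x v) * X ^ v) ^ g v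
        = PowerSeries.C (R := ℂ) (∏ v ∈ Icc 1 n, x v ^ g v) * X ^ (∑ v ∈ Icc 1 n, v * g v) := by
      rw [map_prod, ← Finset.prod_pow_eq_pow_sum, ← Finset.prod_mul_distrib]
      refine Finset.prod_congr rfl fun v _ => ?_
      rw [mul_pow, map_pow, pow_mul]
    rw [hprod, ← map_natCast (PowerSeries.C (R := ℂ)) (Nat.multinomial (Icc 1 n) g), ← mul_assoc,
      ← map_mul, PowerSeries.coeff_C_mul, PowerSeries.coeff_X_pow]
    by_cases hw : ∑ v ∈ Icc 1 n, v * g v = n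
    · rw [if_pos hw, if_pos hw.symm, mul_one]
    · rw [if_neg hw, if_neg (fun hh => hw hh.symm), mul_zero]
  rw [Finset.sum_congr rfl hterm]
  rw [← Finset.sum_filter]
  rw [ordBell, ← Finset.sum_filter]
  have hm1 : 1 ≤ n - k + 1 := by omega
  have hmn : n - k + 1 ≤ n := by omega
  refine Finset.sum_bij'
    (i := fun g hg => fun j : Fin (n - k + 1) => (⟨g (j.1 + 1), ?_⟩ : Fin (n + 1)))
    (j := fun i hi => fun v : ℕ =>
      if h : 1 ≤ v ∧ v ≤ n - k + 1 then (i ⟨v - 1, by omega⟩ : ℕ) else 0)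
    ?_ ?_ ?_ ?_ ?_
  -- the bound `g (j+1) < n + 1`
  · simp only [Finset.mem_filter, Finset.mem_piAntidiag] at hg
    by_cases h0 : g (j.1 + 1) = 0
    · omega
    · have hle := Finset.single_le_sum (f := g) (fun i _ => Nat.zero_le _) (hg.1.2 _ h0)
      rw [hg.1.1] at hle
      omega
  -- `φ` maps into the right-hand side index set
  · intro g hg
    simp only [Finset.mem_filter, Finset.mem_piAntidiag] at hg
    have hb := support_bound hk g hg.1.2 hg.1.1 hg.2
    simp only [Finset.mem_filter, Finset.mem_univ, true_and]
    constructor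
    · rw [← sum_Icc_eq_fin n (n - k + 1) hm1 hmn g hb]
      exact hg.1.1
    · rw [← sum_Icc_eq_fin n (n - k + 1) hm1 hmn (fun v => v * g v)
        (fun v hv => by show v * g v = 0; rw [hb v hv, Nat.mul_zero])]
      exact hg.2
  -- `ψ` maps into the left-hand side index set
  · intro i hi
    simp only [Finset.mem_filter, Finset.mem_univ, true_and] at hi
    have hpsi : ∀ j : Fin (n - k + 1),
        (if h : 1 ≤ j.1 + 1 ∧ j.1 + 1 ≤ n - k + 1 then
          (i ⟨j.1 + 1 - 1, by omega⟩ : ℕ) else 0) = (i j : ℕ) := by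
      intro j
      rw [dif_pos ⟨by omega, by omega⟩]
      congr 1
    have hzero : ∀ v : ℕ, n - k + 1 < v →
        (if h : 1 ≤ v ∧ v ≤ n - k + 1 then (i ⟨v - 1, by omega⟩ : ℕ) else 0) = 0 := by
      intro v hv
      rw [dif_neg (by omega)]
    simp only [Finset.mem_filter, Finset.mem_piAntidiag]
    refine ⟨⟨?_, ?_⟩, ?_⟩
    · rw [sum_Icc_eq_fin n (n - k + 1) hm1 hmn _ hzero]
      rw [Finset.sum_congr rfl (fun j _ => hpsi j)]
      exact hi.1
    · intro v hv
      rw [Finset.mem_Icc]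
      by_contra hcon
      exact hv (dif_neg (by omega))
    · rw [sum_Icc_eq_fin n (n - k + 1) hm1 hmn
        (fun v => v * if h : 1 ≤ v ∧ v ≤ n - k + 1 then (i ⟨v - 1, by omega⟩ : ℕ) else 0)
        (fun v hv => by show v * _ = 0; rw [hzero v hv, Nat.mul_zero])]
      rw [Finset.sum_congr rfl (fun j _ => by rw [hpsi j])]
      exact hi.2
  -- left inverse
  · intro g hg
    simp only [Finset.mem_filter, Finset.mem_piAntidiag] at hg
    have hb := support_bound hk g hg.1.2 hg.1.1 hg.2
    funext v
    dsimp only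
    by_cases hc : 1 ≤ v ∧ v ≤ n - k + 1
    · rw [dif_pos hc]
      show g (v - 1 + 1) = g v
      congr 1
      omega
    · rw [dif_neg hc]
      rcases (by omega : v = 0 ∨ n - k + 1 < v) with h0 | h1
      · subst h0
        by_contra hcon
        have := hg.1.2 0 (fun hz => hcon hz.symm)
        rw [Finset.mem_Icc] at this
        omega
      · exact (hb v h1).symm
  -- right inverse
  · intro i hi
    funext j
    apply Fin.ext
    dsimp only
    rw [dif_pos ⟨by omega, by omega⟩]
    congr 1
  -- values agree
  · intro g hg
    simp only [Finset.mem_filter, Finset.mem_piAntidiag] at hg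
    have hb := support_bound hk g hg.1.2 hg.1.1 hg.2
    dsimp only
    have hprod1 : ∏ v ∈ Icc 1 n, x v ^ g v = ∏ j : Fin (n - k + 1), x (j.1 + 1) ^ g (j.1 + 1) :=
      prod_Icc_eq_fin n (n - k + 1) hm1 hmn (fun v => x v ^ g v)
        (fun v hv => by show x v ^ g v = 1; rw [hb v hv, pow_zero])
    have hprod2 : ∏ v ∈ Icc 1 n, ((g v).factorial : ℂ)
        = ∏ j : Fin (n - k + 1), ((g (j.1 + 1)).factorial : ℂ) :=
      prod_Icc_eq_fin n (n - k + 1) hm1 hmn (fun v => ((g v).factorial : ℂ))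
        (fun v hv => by show ((g v).factorial : ℂ) = 1; rw [hb v hv]; simp)
    have hne : (∏ v ∈ Icc 1 n, ((g v).factorial : ℂ)) ≠ 0 :=
      Finset.prod_ne_zero_iff.2 fun v _ => Nat.cast_ne_zero.2 (Nat.factorial_ne_zero _)
    have hmult : (Nat.multinomial (Icc 1 n) g : ℂ)
        = (k.factorial : ℂ) / ∏ v ∈ Icc 1 n, ((g v).factorial : ℂ) := by
      have spec := Nat.multinomial_spec (s := Icc 1 n) (f := g)
      rw [hg.1.1] at spec
      have hc := congrArg (Nat.cast : ℕ → ℂ) spec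
      push_cast at hc
      rw [eq_div_iff hne, mul_comm]
      exact hc
    rw [hmult, hprod1, hprod2]

/-- For `x_n = (-1)^n ∑_i a_i binom(n-1+q_i, n)` and `λ_n(s)` defined by
`(1+t)^s = 1 + ∑_{n≥1} λ_n(s) (∑_k x_k t^k)^n`, one has, for `n ≥ 2`,
`∑_{k=1}^n λ_k(n-1) B_{n,k}(x_1, …, x_{n-k+1}) = 0`. -/
theorem stmt10 (m : ℕ) (hm : 1 ≤ m) (a q : ℕ → ℂ)
    (hsum : ∑ i ∈ Finset.Icc 1 m, a i = 0)
    (hc1 : ∑ i ∈ Finset.Icc 1 m, a i * q i ≠ 0)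
    (x : ℕ → ℂ)
    (hx : ∀ n : ℕ, x n = (-1) ^ n * ∑ i ∈ Finset.Icc 1 m, a i * gbinom ((n : ℂ) - 1 + q i) n)
    (F : PowerSeries ℂ) (hF : F = PowerSeries.mk fun n => if n = 0 then 0 else x n)
    (lam : ℕ → ℂ → ℂ) (hlam0 : ∀ s : ℂ, lam 0 s = 1)
    (hlam : ∀ (s : ℂ) (N : ℕ), PowerSeries.coeff (R := ℂ) N (cpow (1 + PowerSeries.X) s) =
      ∑ n ∈ Finset.range (N + 1), lam n s * PowerSeries.coeff (R := ℂ) N (F ^ n)) :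
    ∀ n : ℕ, 2 ≤ n →
      ∑ k ∈ Finset.Icc 1 n, lam k ((n : ℂ) - 1) * ordBell n k x = 0 := by
  intro n hn
  have hs := hlam ((n : ℂ) - 1) n
  rw [coeff_cpow, gbinom_nat_sub_one n (by omega), Finset.sum_range_succ'] at hs
  have h00 : lam 0 ((n:ℂ)-1) * PowerSeries.coeff (R := ℂ) n (F ^ 0) = 0 := by
    rw [pow_zero, PowerSeries.coeff_one, if_neg (by omega), mul_zero]
  rw [h00, add_zero] at hs
  have hconv : ∑ i ∈ Finset.range n, lam (i+1) ((n:ℂ)-1) * PowerSeries.coeff (R := ℂ) n (F ^ (i+1))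
      = ∑ k ∈ Finset.Icc 1 n, lam k ((n:ℂ)-1) * ordBell n k x := by
    refine Finset.sum_nbij' (i := fun i => i + 1) (j := fun k => k - 1) ?_ ?_ ?_ ?_ ?_
    · intro a ha; simp only [Finset.mem_range, Finset.mem_Icc] at ha ⊢; omega
    · intro a ha; simp only [Finset.mem_range, Finset.mem_Icc] at ha ⊢; omega
    · intro a ha; simp only [Finset.mem_range, Finset.mem_Icc] at ha ⊢; omega
    · intro a ha; simp only [Finset.mem_range, Finset.mem_Icc] at ha ⊢; omega
    · intro a ha; rw [Finset.mem_range] at ha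
      rw [coeff_F_pow n (a+1) (by omega) (by omega) x F hF]
  rw [← hconv]
  exact hs.symm
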